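/- Let ℋ be a weak involutive basis of a left ideal I in a polynomial algebra of solvable type over a field, with respect to an involutive division L. Then there exists a subset ℋ' ⊆ ℋ which is a strong involutive basis of I. -/

import Mathlib

/-- Polynomials in `n` variables over `R`, represented by their coefficient families
indexed by multi indices. -/
abbrev SPoly (R : Type) [CommRing R] (n : ℕ) := (Fin n → ℕ) →₀ R

/-- The leading exponent of a polynomial with respect to a term order (the maximal
element of its support; `0` for the zero polynomial). -/
noncomputable def lexp {R : Type} [CommRing R] {n : ℕ} (ord : LinearOrder (Fin n → ℕ))
    (f : SPoly R n) : Fin n → ℕ :=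
  (@Finset.max _ ord f.support).unbotD 0

/-- A polynomial algebra of solvable type `(P, ⋆, ≺)`: the `R`-module `R[x₁,…,xₙ]`
equipped with an associative unital multiplication `⋆` such that `r ⋆ f = r • f` for
scalars, and with respect to a term order `≺` (a monoid order) the leading exponent of
`x^μ ⋆ x^ν` is `μ + ν` and of `x^μ ⋆ r` (for `r ≠ 0`) is `μ`. -/
structure SolvMul (R : Type) [CommRing R] (n : ℕ) (ord : LinearOrder (Fin n → ℕ)) where
  star : SPoly R n → SPoly R n → SPoly R n
  zero_min : ∀ μ : Fin n → ℕ, ord.le 0 μ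
  add_compat : ∀ μ ν σ : Fin n → ℕ, ord.lt μ ν → ord.lt (μ + σ) (ν + σ)
  star_assoc : ∀ f g h : SPoly R n, star (star f g) h = star f (star g h)
  star_add : ∀ f g h : SPoly R n, star f (g + h) = star f g + star f h
  add_star : ∀ f g h : SPoly R n, star (f + g) h = star f h + star g h
  one_star : ∀ f : SPoly R n, star (Finsupp.single 0 1) f = f
  star_one : ∀ f : SPoly R n, star f (Finsupp.single 0 1) = f
  scalar_star : ∀ (r : R) (f : SPoly R n), star (Finsupp.single 0 r) f = r • f
  mono_mono : ∀ μ ν : Fin n → ℕ,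
    star (Finsupp.single μ 1) (Finsupp.single ν 1) ≠ 0 ∧
      lexp ord (star (Finsupp.single μ 1) (Finsupp.single ν 1)) = μ + ν
  mono_scalar : ∀ (μ : Fin n → ℕ) (r : R), r ≠ 0 →
    star (Finsupp.single μ 1) (Finsupp.single 0 r) ≠ 0 ∧
      lexp ord (star (Finsupp.single μ 1) (Finsupp.single 0 r)) = μ


/-- The restricted cone of `ν` determined by a set `N` of multiplicative indices. -/
def rcone {n : ℕ} (N : Set (Fin n)) (ν : Fin n → ℕ) : Set (Fin n → ℕ) :=
  {μ | (∀ i, ν i ≤ μ i) ∧ ∀ i ∉ N, μ i = ν i}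

/-- An involutive division on `ℕ^n`. -/
structure InvDiv (n : ℕ) where
  mult : Finset (Fin n → ℕ) → (Fin n → ℕ) → Set (Fin n)
  nested : ∀ (𝒩 : Finset (Fin n → ℕ)), ∀ μ ∈ 𝒩, ∀ ν ∈ 𝒩,
    (rcone (mult 𝒩 μ) μ ∩ rcone (mult 𝒩 ν) ν).Nonempty →
      rcone (mult 𝒩 μ) μ ⊆ rcone (mult 𝒩 ν) ν ∨
        rcone (mult 𝒩 ν) ν ⊆ rcone (mult 𝒩 μ) μ
  mono : ∀ (𝒩 𝒩' : Finset (Fin n → ℕ)), 𝒩' ⊆ 𝒩 → ∀ ν ∈ 𝒩', mult 𝒩 ν ⊆ mult 𝒩' ν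

/-- The set of leading exponents of a finite set of polynomials. -/
noncomputable def leadSet {R : Type} [CommRing R] {n : ℕ} (ord : LinearOrder (Fin n → ℕ))
    (ℋ : Finset (SPoly R n)) : Finset (Fin n → ℕ) :=
  ℋ.image (lexp ord)

/-- The monoid ideal of leading exponents of (the nonzero elements of) a set of
polynomials. -/
def leadExps {R : Type} [CommRing R] {n : ℕ} (ord : LinearOrder (Fin n → ℕ))
    (I : Set (SPoly R n)) : Set (Fin n → ℕ) :=
  {μ | ∃ f ∈ I, f ≠ 0 ∧ lexp ord f = μ}

/-- `P` gives an involutive standard representation of `f` with respect to `ℋ`: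
`f = Σ_{h∈ℋ} P_h ⋆ h`, every `P_h` only involves the multiplicative variables of `h`,
and `le(P_h ⋆ h) ⪯ le(f)`. -/
def IsInvRep {R : Type} [CommRing R] {n : ℕ} (ord : LinearOrder (Fin n → ℕ))
    (A : SolvMul R n ord) (L : InvDiv n) (ℋ : Finset (SPoly R n)) (f : SPoly R n)
    (P : {h // h ∈ ℋ} → SPoly R n) : Prop :=
  f = ∑ h ∈ ℋ.attach, A.star (P h) h.1 ∧
    ∀ h : {h // h ∈ ℋ},
      (∀ μ ∈ (P h).support, ∀ i ∉ L.mult (leadSet ord ℋ) (lexp ord h.1), μ i = 0) ∧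
      ord.le (lexp ord (A.star (P h) h.1)) (lexp ord f)

/-- `ℋ` is a weak involutive basis of the left ideal `I`: `ℋ ⊂ I \ {0}` and the
leading exponents of `ℋ` form a weak involutive basis of the monoid ideal of leading
exponents of `I`. -/
def WeakInvBasis {R : Type} [CommRing R] {n : ℕ} (ord : LinearOrder (Fin n → ℕ))
    (L : InvDiv n) (I : Set (SPoly R n)) (ℋ : Finset (SPoly R n)) : Prop :=
  (↑ℋ : Set (SPoly R n)) ⊆ I ∧ (0 : SPoly R n) ∉ ℋ ∧
    (⋃ μ ∈ leadSet ord ℋ, rcone (L.mult (leadSet ord ℋ) μ) μ) = leadExps ord I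

/-- `ℋ` is a strong involutive basis of `I`: a weak one whose involutive cones are
pairwise disjoint and whose elements have pairwise distinct leading exponents. -/
def StrongInvBasis {R : Type} [CommRing R] {n : ℕ} (ord : LinearOrder (Fin n → ℕ))
    (L : InvDiv n) (I : Set (SPoly R n)) (ℋ : Finset (SPoly R n)) : Prop :=
  WeakInvBasis ord L I ℋ ∧ Set.InjOn (lexp ord) (↑ℋ : Set (SPoly R n)) ∧
    ∀ μ ∈ leadSet ord ℋ, ∀ ν ∈ leadSet ord ℋ, μ ≠ ν →
      Disjoint (rcone (L.mult (leadSet ord ℋ) μ) μ) (rcone (L.mult (leadSet ord ℋ) ν) ν)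


section Helpers

variable {K : Type} [Field K] {n : ℕ} (ord : LinearOrder (Fin n → ℕ))

lemma lexp_mem_support {f : SPoly K n} (hf : f ≠ 0) : lexp ord f ∈ f.support := by
  letI := ord
  obtain ⟨a, ha⟩ := Finset.max_of_nonempty (Finsupp.support_nonempty_iff.2 hf)
  have h2 : lexp ord f = a := by simp [lexp, ha]
  rw [h2]
  exact Finset.mem_of_max ha

lemma le_lexp {f : SPoly K n} {μ : Fin n → ℕ} (hμ : μ ∈ f.support) :
    ord.le μ (lexp ord f) := by
  letI := ord
  have hf : f ≠ 0 := by rintro rfl; simp at hμ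
  obtain ⟨a, ha⟩ := Finset.max_of_nonempty (Finsupp.support_nonempty_iff.2 hf)
  have h2 : lexp ord f = a := by simp [lexp, ha]
  rw [h2]
  exact Finset.le_max_of_eq hμ ha

lemma lexp_eq_of {f : SPoly K n} {τ : Fin n → ℕ} (hτ : f τ ≠ 0)
    (hb : ∀ μ ∈ f.support, ord.le μ τ) : lexp ord f = τ := by
  have hmem : τ ∈ f.support := Finsupp.mem_support_iff.2 hτ
  have hf : f ≠ 0 := by rintro rfl; simp at hτ
  exact @le_antisymm _ ord.toPartialOrder _ _ (hb _ (lexp_mem_support ord hf)) (le_lexp ord hmem)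

lemma lexp_smul {f : SPoly K n} {c : K} (hc : c ≠ 0) : lexp ord (c • f) = lexp ord f := by
  unfold lexp
  rw [Finsupp.support_smul_eq hc]

variable (A : SolvMul K n ord)

lemma star_zero_right (f : SPoly K n) : A.star f 0 = 0 := by
  have h := A.star_add f 0 0
  rw [add_zero] at h
  exact (add_eq_left.mp h.symm)

lemma zero_star (f : SPoly K n) : A.star 0 f = 0 := by
  have h := A.add_star 0 0 f
  rw [add_zero] at h
  exact (add_eq_left.mp h.symm)

lemma smul_star (c : K) (f g : SPoly K n) : A.star (c • f) g = c • A.star f g := by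
  rw [← A.scalar_star c f, A.star_assoc, A.scalar_star]

lemma star_sum_left {ι : Type*} (s : Finset ι) (F : ι → SPoly K n) (g : SPoly K n) :
    A.star (∑ i ∈ s, F i) g = ∑ i ∈ s, A.star (F i) g := by
  classical
  induction s using Finset.induction_on with
  | empty => simp [zero_star ord A]
  | insert a s' h ih => rw [Finset.sum_insert h, Finset.sum_insert h, A.add_star, ih]

lemma star_sum_right {ι : Type*} (s : Finset ι) (f : SPoly K n) (F : ι → SPoly K n) :
    A.star f (∑ i ∈ s, F i) = ∑ i ∈ s, A.star f (F i) := by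
  classical
  induction s using Finset.induction_on with
  | empty => simp [star_zero_right ord A]
  | insert a s' h ih => rw [Finset.sum_insert h, Finset.sum_insert h, A.star_add, ih]

lemma lexp_sum {ι : Type*} (s : Finset ι) (F : ι → SPoly K n) (w : ι → Fin n → ℕ)
    (i0 : ι) (hi0 : i0 ∈ s)
    (hne : ∀ i ∈ s, F i ≠ 0) (hlex : ∀ i ∈ s, lexp ord (F i) = w i)
    (hmax : ∀ i ∈ s, i ≠ i0 → ord.lt (w i) (w i0)) :
    (∑ i ∈ s, F i) ≠ 0 ∧ lexp ord (∑ i ∈ s, F i) = w i0 := by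
  classical
  have hcoeff : (∑ i ∈ s, F i) (w i0) = F i0 (w i0) := by
    rw [Finset.sum_apply']
    refine Finset.sum_eq_single_of_mem i0 hi0 fun i hi hne' => ?_
    by_contra hcon
    have hmem : w i0 ∈ (F i).support := Finsupp.mem_support_iff.2 hcon
    have hle : ord.le (w i0) (w i) := (hlex i hi) ▸ le_lexp ord hmem
    exact @absurd _ _ (hmax i hi hne') (@not_lt_of_ge _ ord.toPreorder _ _ hle)
  have hc0 : F i0 (w i0) ≠ 0 := by
    have := lexp_mem_support ord (hne i0 hi0)
    rw [hlex i0 hi0] at this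
    exact Finsupp.mem_support_iff.1 this
  have hb : ∀ μ ∈ (∑ i ∈ s, F i).support, ord.le μ (w i0) := by
    intro μ hμ
    have hμ' : (∑ i ∈ s, F i) μ ≠ 0 := Finsupp.mem_support_iff.1 hμ
    rw [Finset.sum_apply'] at hμ'
    obtain ⟨i, hi, hiν⟩ : ∃ i ∈ s, F i μ ≠ 0 := by
      by_contra hcon
      push_neg at hcon
      exact hμ' (Finset.sum_eq_zero hcon)
    have h1 : ord.le μ (w i) := (hlex i hi) ▸ le_lexp ord (Finsupp.mem_support_iff.2 hiν)
    rcases eq_or_ne i i0 with rfl | hne'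
    · exact h1
    · exact @le_trans _ ord.toPreorder _ _ _ h1 (@le_of_lt _ ord.toPreorder _ _ (hmax i hi hne'))
  refine ⟨fun h0 => ?_, lexp_eq_of ord (by rw [hcoeff]; exact hc0) hb⟩
  rw [h0] at hcoeff
  simp only [Finsupp.coe_zero, Pi.zero_apply] at hcoeff
  exact hc0 hcoeff.symm

lemma star_mono_right {f : SPoly K n} (hf : f ≠ 0) (ν : Fin n → ℕ) :
    A.star f (Finsupp.single ν 1) ≠ 0 ∧
      lexp ord (A.star f (Finsupp.single ν 1)) = lexp ord f + ν := by
  classical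
  have key : A.star f (Finsupp.single ν 1) =
      ∑ ρ ∈ f.support, f ρ • A.star (Finsupp.single ρ 1) (Finsupp.single ν 1) := by
    conv_lhs => rw [← Finsupp.sum_single f, Finsupp.sum, star_sum_left ord A]
    refine Finset.sum_congr rfl fun ρ _ => ?_
    rw [← smul_star ord A]
    congr 1
    rw [Finsupp.smul_single, smul_eq_mul, mul_one]
  rw [key]
  exact lexp_sum ord (s := f.support)
    (F := fun ρ => f ρ • A.star (Finsupp.single ρ 1) (Finsupp.single ν 1))
    (w := fun ρ => ρ + ν) (lexp ord f) (lexp_mem_support ord hf)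
    (fun ρ hρ => smul_ne_zero (Finsupp.mem_support_iff.1 hρ) (A.mono_mono ρ ν).1)
    (fun ρ hρ => by
      rw [lexp_smul ord (Finsupp.mem_support_iff.1 hρ), (A.mono_mono ρ ν).2])
    (fun ρ hρ hne => A.add_compat ρ (lexp ord f) ν
      (@lt_of_le_of_ne _ ord.toPartialOrder _ _ (le_lexp ord hρ) hne))

lemma star_mono_left {g : SPoly K n} (hg : g ≠ 0) (σ : Fin n → ℕ) :
    A.star (Finsupp.single σ 1) g ≠ 0 ∧
      lexp ord (A.star (Finsupp.single σ 1) g) = σ + lexp ord g := by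
  classical
  have key : A.star (Finsupp.single σ 1) g =
      ∑ ν ∈ g.support,
        A.star (A.star (Finsupp.single σ 1) (Finsupp.single 0 (g ν))) (Finsupp.single ν 1) := by
    conv_lhs => rw [← Finsupp.sum_single g, Finsupp.sum, star_sum_right ord A]
    refine Finset.sum_congr rfl fun ν hν => ?_
    rw [A.star_assoc]
    congr 1
    rw [A.scalar_star, Finsupp.smul_single, smul_eq_mul, mul_one]
  rw [key]
  refine lexp_sum ord (s := g.support)
    (F := fun ν => A.star (A.star (Finsupp.single σ 1) (Finsupp.single 0 (g ν)))
      (Finsupp.single ν 1))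
    (w := fun ν => σ + ν) (lexp ord g) (lexp_mem_support ord hg)
    (fun ν hν => ?_) (fun ν hν => ?_) (fun ν hν hne => ?_)
  · exact (star_mono_right ord A (A.mono_scalar σ (g ν) (Finsupp.mem_support_iff.1 hν)).1 ν).1
  · rw [(star_mono_right ord A (A.mono_scalar σ (g ν) (Finsupp.mem_support_iff.1 hν)).1 ν).2,
      (A.mono_scalar σ (g ν) (Finsupp.mem_support_iff.1 hν)).2]
  · have := A.add_compat ν (lexp ord g) σ
      (@lt_of_le_of_ne _ ord.toPartialOrder _ _ (le_lexp ord hν) hne)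
    rwa [add_comm ν σ, add_comm (lexp ord g) σ] at this

end Helpers


section Main

variable {K : Type} [Field K] {n : ℕ} (ord : LinearOrder (Fin n → ℕ))
variable [DecidableEq (SPoly K n)]

lemma rcone_mono {N N' : Set (Fin n)} (h : N ⊆ N') (ν : Fin n → ℕ) :
    rcone N ν ⊆ rcone N' ν := by
  rintro μ ⟨h1, h2⟩
  exact ⟨h1, fun i hi => h2 i (fun hmem => hi (h hmem))⟩

lemma mem_rcone_self (N : Set (Fin n)) (ν : Fin n → ℕ) : ν ∈ rcone N ν :=
  ⟨fun i => le_rfl, fun i _ => rfl⟩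

lemma leadExps_upward (A : SolvMul K n ord) (I : Set (SPoly K n))
    (hImul : ∀ f ∈ I, ∀ p : SPoly K n, A.star p f ∈ I)
    {h : SPoly K n} (hhI : h ∈ I) (hh0 : h ≠ 0) {τ : Fin n → ℕ}
    (hτ : ∀ i, lexp ord h i ≤ τ i) : τ ∈ leadExps ord I := by
  set σ : Fin n → ℕ := fun i => τ i - lexp ord h i with hσ
  have hστ : σ + lexp ord h = τ := funext fun i => Nat.sub_add_cancel (hτ i)
  exact ⟨A.star (Finsupp.single σ 1) h, hImul h hhI _,
    (star_mono_left ord A hh0 σ).1, by rw [(star_mono_left ord A hh0 σ).2, hστ]⟩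

lemma exists_of_mem_leadSet {s : Finset (SPoly K n)} {ρ : Fin n → ℕ}
    (hρ : ρ ∈ leadSet ord s) : ∃ k ∈ s, lexp ord k = ρ := by
  simpa [leadSet] using hρ

lemma erase_weak (A : SolvMul K n ord) (L : InvDiv n) (I : Set (SPoly K n))
    (hImul : ∀ f ∈ I, ∀ p : SPoly K n, A.star p f ∈ I)
    (s : Finset (SPoly K n)) (hw : WeakInvBasis ord L I s)
    (h : SPoly K n) (hh : h ∈ s)
    (hls : leadSet ord (s.erase h) = (leadSet ord s).erase (lexp ord h))
    (ν : Fin n → ℕ) (hν : ν ∈ leadSet ord s) (hνne : ν ≠ lexp ord h)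
    (hsub : rcone (L.mult (leadSet ord s) (lexp ord h)) (lexp ord h) ⊆
      rcone (L.mult (leadSet ord s) ν) ν) :
    WeakInvBasis ord L I (s.erase h) := by
  obtain ⟨hsI, hs0, hunion⟩ := hw
  have hsubS : s.erase h ⊆ s := Finset.erase_subset _ _
  have hlsub : leadSet ord (s.erase h) ⊆ leadSet ord s := by
    rw [hls]; exact Finset.erase_subset _ _
  have hν' : ν ∈ leadSet ord (s.erase h) := by
    rw [hls]; exact Finset.mem_erase.2 ⟨hνne, hν⟩
  refine ⟨fun x hx => hsI (hsubS hx), fun hx => hs0 (hsubS hx), ?_⟩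
  apply Set.Subset.antisymm
  · intro τ hτ
    simp only [Set.mem_iUnion, exists_prop] at hτ
    obtain ⟨ρ, hρ, hτρ⟩ := hτ
    obtain ⟨k, hk, hkρ⟩ := exists_of_mem_leadSet ord (hlsub hρ)
    exact leadExps_upward ord A I hImul (hsI hk) (fun h0 => hs0 (h0 ▸ hk))
      (fun i => hkρ ▸ hτρ.1 i)
  · intro τ hτ
    rw [← hunion] at hτ
    simp only [Set.mem_iUnion, exists_prop] at hτ ⊢
    obtain ⟨ρ, hρ, hτρ⟩ := hτ
    rcases eq_or_ne ρ (lexp ord h) with rfl | hρne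
    · exact ⟨ν, hν', rcone_mono (L.mono _ _ hlsub ν hν') ν (hsub hτρ)⟩
    · have hρ' : ρ ∈ leadSet ord (s.erase h) := by
        rw [hls]; exact Finset.mem_erase.2 ⟨hρne, hρ⟩
      exact ⟨ρ, hρ', rcone_mono (L.mono _ _ hlsub ρ hρ') ρ hτρ⟩

end Main

/-- Every weak involutive basis of a left ideal `I` in a polynomial algebra of
solvable type over a field contains a subset which is a strong involutive basis
of `I`. -/
theorem stmt15 {K : Type} [Field K] {n : ℕ} (ord : LinearOrder (Fin n → ℕ))
    (A : SolvMul K n ord) (L : InvDiv n) (I : Set (SPoly K n))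
    (hI0 : (0 : SPoly K n) ∈ I)
    (hIadd : ∀ f ∈ I, ∀ g ∈ I, f + g ∈ I)
    (hIneg : ∀ f ∈ I, -f ∈ I)
    (hImul : ∀ f ∈ I, ∀ p : SPoly K n, A.star p f ∈ I)
    (ℋ : Finset (SPoly K n)) (hweak : WeakInvBasis ord L I ℋ) :
    ∃ ℋ' ⊆ ℋ, StrongInvBasis ord L I ℋ' := by
  classical
  suffices H : ∀ s : Finset (SPoly K n),
      WeakInvBasis ord L I s → ∃ s' ⊆ s, StrongInvBasis ord L I s' from H ℋ hweak
  intro s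
  induction s using Finset.strongInductionOn with
  | _ s IH =>
  intro hw
  by_cases hinj : Set.InjOn (lexp ord) (↑s : Set (SPoly K n))
  · by_cases hdisj : ∀ μ ∈ leadSet ord s, ∀ ν ∈ leadSet ord s, μ ≠ ν →
        Disjoint (rcone (L.mult (leadSet ord s) μ) μ) (rcone (L.mult (leadSet ord s) ν) ν)
    · exact ⟨s, Finset.Subset.refl s, hw, hinj, hdisj⟩
    · push_neg at hdisj
      obtain ⟨μ, hμ, ν, hν, hμν, hnd⟩ := hdisj
      have hremove : ∀ μ' ν', μ' ∈ leadSet ord s → ν' ∈ leadSet ord s → ν' ≠ μ' →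
          rcone (L.mult (leadSet ord s) μ') μ' ⊆ rcone (L.mult (leadSet ord s) ν') ν' →
          ∃ s' ⊆ s, StrongInvBasis ord L I s' := by
        intro μ' ν' hμ' hν' hne hsub
        obtain ⟨h, hh, hlh⟩ := exists_of_mem_leadSet ord hμ'
        subst hlh
        have hls : leadSet ord (s.erase h) = (leadSet ord s).erase (lexp ord h) := by
          ext ρ
          simp only [leadSet, Finset.mem_image, Finset.mem_erase] at *
          constructor
          · rintro ⟨k, ⟨hkh, hks⟩, rfl⟩
            exact ⟨fun he => hkh (hinj hks hh he), k, hks, rfl⟩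
          · rintro ⟨hρh, k, hks, rfl⟩
            exact ⟨k, ⟨fun he => hρh (by rw [he]), hks⟩, rfl⟩
        have hw' := erase_weak ord A L I hImul s hw h hh hls ν' hν' hne hsub
        obtain ⟨s', hs', hstrong⟩ := IH (s.erase h) (Finset.erase_ssubset hh) hw'
        exact ⟨s', hs'.trans (Finset.erase_subset _ _), hstrong⟩
      have hint : (rcone (L.mult (leadSet ord s) μ) μ ∩
          rcone (L.mult (leadSet ord s) ν) ν).Nonempty :=
        Set.not_disjoint_iff_nonempty_inter.1 hnd
      rcases L.nested (leadSet ord s) μ hμ ν hν hint with hsub | hsub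
      · exact hremove μ ν hμ hν (Ne.symm hμν) hsub
      · exact hremove ν μ hν hμ hμν hsub
  · rw [Set.InjOn] at hinj
    push_neg at hinj
    obtain ⟨a, ha, b, hb, hab, hne⟩ := hinj
    have hls : leadSet ord (s.erase a) = leadSet ord s := by
      ext ρ
      simp only [leadSet, Finset.mem_image]
      constructor
      · rintro ⟨k, hk, rfl⟩
        exact ⟨k, Finset.mem_of_mem_erase hk, rfl⟩
      · rintro ⟨k, hks, rfl⟩
        rcases eq_or_ne k a with rfl | hka
        · exact ⟨b, Finset.mem_erase.2 ⟨fun he => hne he.symm, hb⟩, hab.symm⟩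
        · exact ⟨k, Finset.mem_erase.2 ⟨hka, hks⟩, rfl⟩
    have hw' : WeakInvBasis ord L I (s.erase a) := by
      obtain ⟨hsI, hs0, hunion⟩ := hw
      refine ⟨fun x hx => hsI (Finset.erase_subset _ _ hx),
        fun hx => hs0 (Finset.erase_subset _ _ hx), ?_⟩
      rw [hls]
      exact hunion
    obtain ⟨s', hs', hstrong⟩ := IH (s.erase a) (Finset.erase_ssubset (by exact_mod_cast ha)) hw'
    exact ⟨s', hs'.trans (Finset.erase_subset _ _), hstrong⟩
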